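/- For a prime p > 3, define def_(3) = I_{p,2} + 2·I_{p,-4}, where I_{p,q} = Σ_{k=1}^{p-1} ((1+μ^k)(1+μ^{kq}))/((1−μ^k)(1−μ^{kq})) and μ = exp(2πi/p). Then def_(3) = −8r if p = 4r+1 and def_(3) = 2 if p = 4r+3. -/

import Mathlib

open Finset

noncomputable def mu (p : ℕ) : ℂ := Complex.exp (2 * Real.pi * Complex.I / p)

noncomputable def Ipq (p : ℕ) (q : ℤ) : ℂ :=
  ∑ k ∈ Finset.Icc 1 (p - 1),
    ((1 + mu p ^ (k : ℤ)) * (1 + mu p ^ (q * k))) /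
      ((1 - mu p ^ (k : ℤ)) * (1 - mu p ^ (q * k)))

/-- Per-term algebraic identity for a root of unity `w` of odd order. -/
lemma perterm (n : ℕ) (hn : Odd n) (w : ℂ) (hw : w ^ n = 1)
    (h1 : w ≠ 1) (h2 : w ^ 2 ≠ 1) (h4 : w ^ 4 ≠ 1) :
    ((1 + w) * (1 + w ^ 2)) / ((1 - w) * (1 - w ^ 2)) +
      2 * (((1 + w) * (1 + (w ^ 4)⁻¹)) / ((1 - w) * (1 - (w ^ 4)⁻¹))) =
    -1 - w * ∑ t ∈ Finset.range n, (-(w ^ 2)) ^ t := by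
  have hw0 : w ≠ 0 := by
    intro h
    rw [h] at hw
    rw [zero_pow (by rintro rfl; exact (by norm_num : ¬ Odd 0) hn)] at hw
    exact one_ne_zero hw.symm
  have h2' : (1 : ℂ) + w ^ 2 ≠ 0 := by
    intro h
    apply h4
    have hsq : w ^ 2 = -1 := by linear_combination h
    calc w ^ 4 = (w ^ 2) ^ 2 := by ring
    _ = 1 := by rw [hsq]; ring
  have hgeo : (∑ t ∈ Finset.range n, (-(w ^ 2)) ^ t) * (1 + w ^ 2) = 2 := by
    have hg := geom_sum_mul (-(w ^ 2)) n
    rw [hn.neg_pow] at hg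
    have hw2 : (w ^ 2) ^ n = 1 := by
      rw [← pow_mul, mul_comm, pow_mul, hw, one_pow]
    rw [hw2] at hg
    linear_combination -hg
  have hS : ∑ t ∈ Finset.range n, (-(w ^ 2)) ^ t = 2 / (1 + w ^ 2) :=
    eq_div_of_mul_eq h2' hgeo
  rw [hS]
  have hd1 : (1 : ℂ) - w ≠ 0 := sub_ne_zero.mpr (Ne.symm h1)
  have hd2 : (1 : ℂ) - w ^ 2 ≠ 0 := sub_ne_zero.mpr (Ne.symm h2)
  have hw4 : w ^ 4 ≠ 0 := pow_ne_zero _ hw0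
  have hd4' : (1 : ℂ) - w ^ 4 ≠ 0 := sub_ne_zero.mpr (Ne.symm h4)
  have hd4 : (1 : ℂ) - (w ^ 4)⁻¹ ≠ 0 := by
    rw [sub_ne_zero]
    intro h
    exact h4 (inv_eq_one.mp h.symm)
  have hd4'' : w ^ 4 - 1 ≠ 0 := sub_ne_zero.mpr h4
  have efrac : ((1 + w) * (1 + (w ^ 4)⁻¹)) / ((1 - w) * (1 - (w ^ 4)⁻¹))
      = ((1 + w) * (1 + w ^ 4)) / ((1 - w) * (w ^ 4 - 1)) := by
    rw [div_eq_div_iff (mul_ne_zero hd1 hd4) (mul_ne_zero hd1 hd4'')]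
    field_simp
    ring
  rw [efrac]
  field_simp
  ring

/-- Inner character sum over `k`. -/
lemma innersum (p : ℕ) (hp3 : 3 < p) (hp2 : p % 2 = 1)
    (hprim : IsPrimitiveRoot (mu p) p) (t : ℕ) (ht : t ∈ Finset.range p) :
    ∑ k ∈ Finset.Icc 1 (p - 1), (mu p ^ (2 * t + 1)) ^ k =
      (if t = (p - 1) / 2 then (p : ℂ) else 0) - 1 := by
  simp only [Finset.mem_range] at ht
  set x : ℂ := mu p ^ (2 * t + 1) with hx
  have hxp : x ^ p = 1 := by
    rw [hx, ← pow_mul, mul_comm, pow_mul, hprim.pow_eq_one, one_pow]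
  have hiff : x = 1 ↔ t = (p - 1) / 2 := by
    rw [hx, hprim.pow_eq_one_iff_dvd]
    constructor
    · rintro ⟨c, hc⟩
      have hc2 : c < 2 := by nlinarith
      interval_cases c <;> omega
    · intro h
      exact ⟨1, by omega⟩
  have hrange : Finset.range p = insert 0 (Finset.Icc 1 (p - 1)) := by
    ext a
    simp only [Finset.mem_range, Finset.mem_insert, Finset.mem_Icc]
    omega
  have hfull : ∑ k ∈ Finset.range p, x ^ k = if t = (p - 1) / 2 then (p : ℂ) else 0 := by
    by_cases h : x = 1
    · rw [if_pos (hiff.mp h), h]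
      simp
    · rw [if_neg (fun ht' => h (hiff.mpr ht')), geom_sum_eq h, hxp, sub_self, zero_div]
  have h0 : (0 : ℕ) ∉ Finset.Icc 1 (p - 1) := by simp
  rw [hrange, Finset.sum_insert h0, pow_zero] at hfull
  linear_combination hfull

lemma main_eval (p : ℕ) (hp : p.Prime) (hp3 : 3 < p) :
    Ipq p 2 + 2 * Ipq p (-4) =
      -((p : ℂ) - 1) - ((-1) ^ ((p - 1) / 2) * (p : ℂ) - 1) := by
  have hp0 : p ≠ 0 := hp.ne_zero
  have hprim : IsPrimitiveRoot (mu p) p := Complex.isPrimitiveRoot_exp p hp0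
  have hoddp : Odd p := hp.odd_of_ne_two (by omega)
  have hp2 : p % 2 = 1 := Nat.odd_iff.mp hoddp
  -- per-term rewriting
  have hstep : ∀ k ∈ Finset.Icc 1 (p - 1),
      ((1 + mu p ^ (k : ℤ)) * (1 + mu p ^ ((2 : ℤ) * k))) /
        ((1 - mu p ^ (k : ℤ)) * (1 - mu p ^ ((2 : ℤ) * k))) +
      2 * (((1 + mu p ^ (k : ℤ)) * (1 + mu p ^ ((-4 : ℤ) * k))) /
        ((1 - mu p ^ (k : ℤ)) * (1 - mu p ^ ((-4 : ℤ) * k)))) =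
      -1 - ∑ t ∈ Finset.range p, (-1 : ℂ) ^ t * (mu p ^ (2 * t + 1)) ^ k := by
    intro k hk
    simp only [Finset.mem_Icc] at hk
    set w : ℂ := mu p ^ (k : ℕ) with hwdef
    have ez : mu p ^ (k : ℤ) = w := by rw [hwdef, zpow_natCast]
    have e2 : mu p ^ ((2 : ℤ) * k) = w ^ 2 := by
      rw [hwdef, ← pow_mul, ← zpow_natCast (mu p) (k * 2)]
      push_cast
      ring_nf
    have e4 : mu p ^ ((-4 : ℤ) * k) = (w ^ 4)⁻¹ := by
      rw [hwdef, ← pow_mul, ← zpow_natCast (mu p) (k * 4), ← zpow_neg]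
      congr 1
      push_cast
      ring
    have hw : w ^ p = 1 := by
      rw [hwdef, ← pow_mul, mul_comm, pow_mul, hprim.pow_eq_one, one_pow]
    have hdvd : ∀ m : ℕ, ¬ p ∣ m → w ^ m ≠ 1 := by
      intro m hm h
      rw [hwdef, ← pow_mul] at h
      exact hm (by
        have := (hprim.pow_eq_one_iff_dvd (k * m)).mp h
        rcases (Nat.Prime.dvd_mul hp).mp this with h' | h'
        · exact absurd (Nat.le_of_dvd (by omega) h') (by omega)
        · exact h')
    have h1 : w ≠ 1 := by
      have := hdvd 1 (by
        intro h; exact absurd (Nat.le_of_dvd one_pos h) (by omega))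
      simpa using this
    have hnd2 : ¬ p ∣ 2 := fun h => absurd (Nat.le_of_dvd (by norm_num) h) (by omega)
    have h2 : w ^ 2 ≠ 1 := hdvd 2 hnd2
    have h4 : w ^ 4 ≠ 1 := hdvd 4 (by
      intro h; exact absurd (Nat.le_of_dvd (by norm_num) h) (by omega))
    rw [ez, e2, e4, perterm p hoddp w hw h1 h2 h4]
    congr 1
    rw [Finset.mul_sum]
    apply Finset.sum_congr rfl
    intro t _
    rw [neg_pow, ← pow_mul, ← pow_mul (mu p) (2 * t + 1) k,
      show (2 * t + 1) * k = k + k * 2 * t from by ring, pow_add]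
    ring
  have hM : ((p - 1) / 2 : ℕ) ∈ Finset.range p := by
    simp only [Finset.mem_range]; omega
  calc Ipq p 2 + 2 * Ipq p (-4)
      = ∑ k ∈ Finset.Icc 1 (p - 1),
          (((1 + mu p ^ (k : ℤ)) * (1 + mu p ^ ((2 : ℤ) * k))) /
            ((1 - mu p ^ (k : ℤ)) * (1 - mu p ^ ((2 : ℤ) * k))) +
          2 * (((1 + mu p ^ (k : ℤ)) * (1 + mu p ^ ((-4 : ℤ) * k))) /
            ((1 - mu p ^ (k : ℤ)) * (1 - mu p ^ ((-4 : ℤ) * k))))) := by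
        rw [Ipq, Ipq, Finset.mul_sum, ← Finset.sum_add_distrib]
    _ = ∑ k ∈ Finset.Icc 1 (p - 1),
          (-1 - ∑ t ∈ Finset.range p, (-1 : ℂ) ^ t * (mu p ^ (2 * t + 1)) ^ k) :=
        Finset.sum_congr rfl hstep
    _ = ∑ k ∈ Finset.Icc 1 (p - 1), (-1 : ℂ)
        - ∑ k ∈ Finset.Icc 1 (p - 1), ∑ t ∈ Finset.range p,
            (-1 : ℂ) ^ t * (mu p ^ (2 * t + 1)) ^ k := by
        rw [← Finset.sum_sub_distrib]
    _ = -((p : ℂ) - 1)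
        - ∑ t ∈ Finset.range p, (-1 : ℂ) ^ t *
            ((if t = (p - 1) / 2 then (p : ℂ) else 0) - 1) := by
        rw [Finset.sum_comm]
        congr 1
        · rw [Finset.sum_const, Nat.card_Icc, nsmul_eq_mul]
          rw [show p - 1 + 1 - 1 = p - 1 from by omega]
          rw [Nat.cast_sub (by omega : 1 ≤ p)]
          push_cast
          ring
        · apply Finset.sum_congr rfl
          intro t ht
          rw [← Finset.mul_sum, innersum p hp3 hp2 hprim t ht]
    _ = -((p : ℂ) - 1) - ((-1) ^ ((p - 1) / 2) * (p : ℂ) - 1) := by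
        congr 1
        have hsplit : ∀ t ∈ Finset.range p,
            (-1 : ℂ) ^ t * ((if t = (p - 1) / 2 then (p : ℂ) else 0) - 1) =
            (if t = (p - 1) / 2 then ((-1 : ℂ) ^ t * p) else 0) - (-1 : ℂ) ^ t := by
          intro t _
          by_cases h : t = (p - 1) / 2 <;> simp [h] <;> ring
        rw [Finset.sum_congr rfl hsplit, Finset.sum_sub_distrib,
          Finset.sum_ite_eq' (Finset.range p) ((p - 1) / 2) (fun t => (-1 : ℂ) ^ t * p),
          if_pos hM, neg_one_geom_sum, if_neg (by rw [Nat.even_iff, hp2]; norm_num)]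

theorem stmt_15 (p : ℕ) (hp : p.Prime) (hp3 : 3 < p) :
    (∀ r : ℕ, p = 4 * r + 1 → Ipq p 2 + 2 * Ipq p (-4) = -(8 * (r : ℂ))) ∧
    (∀ r : ℕ, p = 4 * r + 3 → Ipq p 2 + 2 * Ipq p (-4) = 2) := by
  have heval := main_eval p hp hp3
  constructor
  · intro r hr
    subst hr
    have hm : (4 * r + 1 - 1) / 2 = 2 * r := by omega
    rw [heval, hm, pow_mul]
    push_cast
    norm_num
    ring
  · intro r hr
    subst hr
    have hm : (4 * r + 3 - 1) / 2 = 2 * r + 1 := by omega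
    rw [heval, hm, pow_succ, pow_mul]
    push_cast
    norm_num
    ring
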